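/- Let F be a real n×p matrix and let k ≥ 1 be an even integer with 2.5k ≤ p satisfying δ_{1.5k} + θ_{k,1.5k} < 1. Let β ∈ ℝ^p be a k-sparse vector and y = Fβ + z with ‖z‖₂ ≤ ε. Then for any η ≥ ε, if β̂ is a minimizer of ‖γ‖₁ over all γ ∈ ℝ^p with ‖y − Fγ‖₂ ≤ η, then ‖β̂ − β‖₂ ≤ C(η + ε), where C = √2(1 + δ_{1.5k}) / (1 − δ_{1.5k} − θ_{k,1.5k}). -/

import Mathlib

/-- A vector `v ∈ ℝ^p` is `k`-sparse if it has at most `k` nonzero entries. -/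
def IsSparse {p : ℕ} (k : ℕ) (v : Fin p → ℝ) : Prop :=
  ∃ s : Finset (Fin p), s.card ≤ k ∧ ∀ i ∉ s, v i = 0

/-- The ℓ₂ norm of a vector in `ℝ^m`. -/
noncomputable def l2norm {m : ℕ} (v : Fin m → ℝ) : ℝ :=
  Real.sqrt (∑ i, v i ^ 2)

/-- The ℓ₁ norm of a vector in `ℝ^m`. -/
def l1norm {m : ℕ} (v : Fin m → ℝ) : ℝ := ∑ i, |v i|

/-- The `k`-restricted isometry constant `δ_k` of `F`: the smallest `δ` such that
`√(1-δ)‖c‖₂ ≤ ‖Fc‖₂ ≤ √(1+δ)‖c‖₂` for every `k`-sparse vector `c`. -/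
noncomputable def ripConst {n p : ℕ} (F : Matrix (Fin n) (Fin p) ℝ) (k : ℕ) : ℝ :=
  sInf {δ : ℝ | ∀ c : Fin p → ℝ, IsSparse k c →
    Real.sqrt (1 - δ) * l2norm c ≤ l2norm (F.mulVec c) ∧
    l2norm (F.mulVec c) ≤ Real.sqrt (1 + δ) * l2norm c}

/-- The `(k,k')`-restricted orthogonality constant `θ_{k,k'}` of `F`: the smallest `θ` such
that `|⟨Fc, Fc'⟩| ≤ θ‖c‖₂‖c'‖₂` for all `k`-sparse `c` and `k'`-sparse `c'` with disjoint
supports. -/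
noncomputable def roConst {n p : ℕ} (F : Matrix (Fin n) (Fin p) ℝ) (k k' : ℕ) : ℝ :=
  sInf {θ : ℝ | ∀ c c' : Fin p → ℝ, IsSparse k c → IsSparse k' c' →
    (∀ i, c i = 0 ∨ c' i = 0) →
    |∑ i, F.mulVec c i * F.mulVec c' i| ≤ θ * (l2norm c * l2norm c')}

open scoped RealInnerProductSpace

section Aux


lemma l2norm_eq_norm {m : ℕ} (v : Fin m → ℝ) :
    l2norm v = ‖(WithLp.equiv 2 (Fin m → ℝ)).symm v‖ := by
  rw [EuclideanSpace.norm_eq]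
  simp [l2norm, sq_abs]

lemma inner_eq {m : ℕ} (v w : Fin m → ℝ) :
    (∑ i, v i * w i) = ⟪(WithLp.equiv 2 (Fin m → ℝ)).symm v, (WithLp.equiv 2 (Fin m → ℝ)).symm w⟫ := by
  rw [PiLp.inner_apply]
  simp [mul_comm]

lemma l2norm_nonneg {m : ℕ} (v : Fin m → ℝ) : 0 ≤ l2norm v := Real.sqrt_nonneg _

lemma mulVec_l2_bound {n p : ℕ} (F : Matrix (Fin n) (Fin p) ℝ) (c : Fin p → ℝ) :
    l2norm (F.mulVec c) ≤ Real.sqrt (∑ i, ∑ j, F i j ^ 2) * l2norm c := by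
  rw [l2norm, l2norm, ← Real.sqrt_mul (by positivity)]
  apply Real.sqrt_le_sqrt
  rw [Finset.sum_mul]
  apply Finset.sum_le_sum
  intro i _
  simpa [Matrix.mulVec, dotProduct] using
    Finset.sum_mul_sq_le_sq_mul_sq Finset.univ (fun j => F i j) c

lemma single_sparse {p k : ℕ} (hk : 1 ≤ k) (i0 : Fin p) (x : ℝ) :
    IsSparse k (fun i => if i = i0 then x else 0) :=
  ⟨{i0}, by simpa using hk, fun i hi => by simp [Finset.mem_singleton] at hi; simp [hi]⟩

lemma l2norm_single {p : ℕ} (i0 : Fin p) : l2norm (fun i => if i = i0 then (1:ℝ) else 0) = 1 := by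
  rw [l2norm]
  rw [Finset.sum_eq_single i0 (by intro b _ hb; simp [hb]) (by simp)]
  simp

lemma ripConst_spec {n p : ℕ} (F : Matrix (Fin n) (Fin p) ℝ) (k : ℕ) (hp : 0 < p) (hk : 1 ≤ k) :
    (∀ c : Fin p → ℝ, IsSparse k c →
      Real.sqrt (1 - ripConst F k) * l2norm c ≤ l2norm (F.mulVec c) ∧
      l2norm (F.mulVec c) ≤ Real.sqrt (1 + ripConst F k) * l2norm c) ∧ 0 ≤ ripConst F k := by
  set S := {δ : ℝ | ∀ c : Fin p → ℝ, IsSparse k c →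
    Real.sqrt (1 - δ) * l2norm c ≤ l2norm (F.mulVec c) ∧
    l2norm (F.mulVec c) ≤ Real.sqrt (1 + δ) * l2norm c} with hS
  have hne : S.Nonempty := by
    refine ⟨1 + ∑ i, ∑ j, F i j ^ 2, fun c _ => ?_⟩
    constructor
    · rw [show (1:ℝ) - (1 + ∑ i, ∑ j, F i j ^ 2) = -(∑ i, ∑ j, F i j ^ 2) by ring]
      rw [Real.sqrt_eq_zero_of_nonpos (neg_nonpos.mpr (by positivity))]
      simpa using l2norm_nonneg (F.mulVec c)
    · refine le_trans (mulVec_l2_bound F c) ?_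
      exact mul_le_mul_of_nonneg_right (Real.sqrt_le_sqrt (by linarith)) (l2norm_nonneg c)
  have hlb : ∀ δ ∈ S, (0:ℝ) ≤ δ := by
    intro δ hδ
    by_contra hneg
    push_neg at hneg
    obtain ⟨h1, h2⟩ := hδ (fun i => if i = ⟨0, hp⟩ then (1:ℝ) else 0) (single_sparse hk _ 1)
    rw [l2norm_single] at h1 h2
    have : Real.sqrt (1 - δ) ≤ Real.sqrt (1 + δ) := by
      calc Real.sqrt (1-δ) = Real.sqrt (1-δ) * 1 := by ring
      _ ≤ l2norm (F.mulVec _) := h1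
      _ ≤ Real.sqrt (1+δ) * 1 := h2
      _ = Real.sqrt (1+δ) := by ring
    have h3 : (1:ℝ) - δ ≤ 1 + δ := by
      rcases le_or_gt 0 (1+δ) with h4|h4
      · by_contra hc
        push_neg at hc
        exact absurd this (not_le.mpr (Real.sqrt_lt_sqrt h4 hc))
      · exfalso
        have hz : Real.sqrt (1+δ) = 0 := Real.sqrt_eq_zero_of_nonpos h4.le
        have hpos : 0 < Real.sqrt (1-δ) := Real.sqrt_pos.mpr (by linarith)
        linarith
    linarith
  have hbdd : BddBelow S := ⟨0, fun δ hδ => hlb δ hδ⟩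
  have hclosed : IsClosed S := by
    have : S = ⋂ (c : Fin p → ℝ), ⋂ (_ : IsSparse k c),
        ({δ : ℝ | Real.sqrt (1 - δ) * l2norm c ≤ l2norm (F.mulVec c)} ∩
         {δ : ℝ | l2norm (F.mulVec c) ≤ Real.sqrt (1 + δ) * l2norm c}) := by
      ext δ; simp only [hS, Set.mem_setOf_eq, Set.mem_iInter, Set.mem_inter_iff]
    rw [this]
    refine isClosed_iInter fun c => isClosed_iInter fun _ => IsClosed.inter ?_ ?_
    · exact isClosed_le (by fun_prop) continuous_const
    · exact isClosed_le continuous_const (by fun_prop)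
  have hmem : sInf S ∈ S := IsClosed.csInf_mem hclosed hne hbdd
  exact ⟨hmem, le_csInf hne hlb⟩

lemma roConst_spec {n p : ℕ} (F : Matrix (Fin n) (Fin p) ℝ) (k k' : ℕ) (hp : 2 ≤ p)
    (hk : 1 ≤ k) (hk' : 1 ≤ k') :
    (∀ c c' : Fin p → ℝ, IsSparse k c → IsSparse k' c' →
      (∀ i, c i = 0 ∨ c' i = 0) →
      |∑ i, F.mulVec c i * F.mulVec c' i| ≤ roConst F k k' * (l2norm c * l2norm c')) ∧
    0 ≤ roConst F k k' := by
  set S := {θ : ℝ | ∀ c c' : Fin p → ℝ, IsSparse k c → IsSparse k' c' →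
    (∀ i, c i = 0 ∨ c' i = 0) →
    |∑ i, F.mulVec c i * F.mulVec c' i| ≤ θ * (l2norm c * l2norm c')} with hS
  have key : ∀ c c' : Fin p → ℝ,
      |∑ i, F.mulVec c i * F.mulVec c' i| ≤ l2norm (F.mulVec c) * l2norm (F.mulVec c') := by
    intro c c'
    have h := abs_real_inner_le_norm ((WithLp.equiv 2 (Fin n → ℝ)).symm (F.mulVec c))
      ((WithLp.equiv 2 (Fin n → ℝ)).symm (F.mulVec c'))
    rw [← inner_eq, ← l2norm_eq_norm, ← l2norm_eq_norm] at h
    exact h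
  have hne : S.Nonempty := by
    refine ⟨(Real.sqrt (∑ i, ∑ j, F i j ^ 2))^2, fun c c' _ _ _ => ?_⟩
    calc |∑ i, F.mulVec c i * F.mulVec c' i| ≤ l2norm (F.mulVec c) * l2norm (F.mulVec c') :=
          key c c'
    _ ≤ (Real.sqrt (∑ i, ∑ j, F i j ^ 2) * l2norm c) *
        (Real.sqrt (∑ i, ∑ j, F i j ^ 2) * l2norm c') := by
        exact mul_le_mul (mulVec_l2_bound F c) (mulVec_l2_bound F c') (l2norm_nonneg _)
          (mul_nonneg (Real.sqrt_nonneg _) (l2norm_nonneg _))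
    _ = (Real.sqrt (∑ i, ∑ j, F i j ^ 2))^2 * (l2norm c * l2norm c') := by ring
  have hlb : ∀ θ ∈ S, (0:ℝ) ≤ θ := by
    intro θ hθ
    have h := hθ (fun i => if i = (⟨0, by omega⟩ : Fin p) then (1:ℝ) else 0)
      (fun i => if i = (⟨1, by omega⟩ : Fin p) then (1:ℝ) else 0)
      (single_sparse hk _ 1) (single_sparse hk' _ 1) ?_
    · rw [l2norm_single, l2norm_single] at h
      have := abs_nonneg (∑ i, F.mulVec (fun i => if i = (⟨0, by omega⟩ : Fin p) then (1:ℝ) else 0) i *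
        F.mulVec (fun i => if i = (⟨1, by omega⟩ : Fin p) then (1:ℝ) else 0) i)
      nlinarith
    · intro i
      rcases eq_or_ne i ⟨0, by omega⟩ with h0 | h0
      · right; simp [h0, show (⟨0, by omega⟩ : Fin p) ≠ ⟨1, by omega⟩ from by simp [Fin.ext_iff]]
      · left; simp [h0]
  have hbdd : BddBelow S := ⟨0, fun θ hθ => hlb θ hθ⟩
  have hclosed : IsClosed S := by
    have : S = ⋂ (c : Fin p → ℝ), ⋂ (c' : Fin p → ℝ), ⋂ (_ : IsSparse k c), ⋂ (_ : IsSparse k' c'),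
        ⋂ (_ : ∀ i, c i = 0 ∨ c' i = 0),
        {θ : ℝ | |∑ i, F.mulVec c i * F.mulVec c' i| ≤ θ * (l2norm c * l2norm c')} := by
      ext θ
      simp only [hS, Set.mem_setOf_eq, Set.mem_iInter]
    rw [this]
    refine isClosed_iInter fun c => isClosed_iInter fun c' => isClosed_iInter fun _ =>
      isClosed_iInter fun _ => isClosed_iInter fun _ => isClosed_le continuous_const (by fun_prop)
  exact ⟨IsClosed.csInf_mem hclosed hne hbdd, le_csInf hne hlb⟩

lemma shifting (c : ℕ → ℝ) (hnn : ∀ i, 0 ≤ c i) (hmono : ∀ i j, i ≤ j → c j ≤ c i)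
    (m s : ℕ) (hm : 1 ≤ m) (hs : m ≤ s) :
    ∑ i ∈ Finset.Ico s (s + 2*m), c i ^ 2 ≤
      (∑ i ∈ Finset.Ico (s - m) (s + m), c i) ^ 2 / (2*m) := by
  set S := ∑ i ∈ Finset.Ico (s - m) s, c i with hSdef
  set T := ∑ i ∈ Finset.Ico s (s + m), c i with hTdef
  have hsplit : ∑ i ∈ Finset.Ico (s - m) (s + m), c i = S + T := by
    rw [hSdef, hTdef, Finset.sum_Ico_consecutive]
    · omega
    · omega
  have hsplit2 : ∑ i ∈ Finset.Ico s (s + 2*m), c i ^ 2 =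
      (∑ i ∈ Finset.Ico s (s + m), c i ^ 2) + ∑ i ∈ Finset.Ico (s + m) (s + 2*m), c i ^ 2 := by
    rw [Finset.sum_Ico_consecutive] <;> omega
  have hA1 : ∑ i ∈ Finset.Ico s (s + m), c i ^ 2 ≤ c s * T := by
    rw [hTdef, Finset.mul_sum]
    apply Finset.sum_le_sum
    intro i hi
    simp only [Finset.mem_Ico] at hi
    have := hmono s i hi.1
    nlinarith [hnn i]
  have hA2 : (m : ℝ) * c s ≤ S := by
    have hcard : (Finset.Ico (s - m) s).card = m := by rw [Nat.card_Ico]; omega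
    calc (m:ℝ) * c s = ∑ _i ∈ Finset.Ico (s - m) s, c s := by rw [Finset.sum_const, hcard]; ring
    _ ≤ S := Finset.sum_le_sum fun i hi => by
        simp only [Finset.mem_Ico] at hi; exact hmono i s hi.2.le
  have hA3 : ∑ i ∈ Finset.Ico (s + m) (s + 2*m), c i ^ 2 ≤ m * c (s + m) ^ 2 := by
    have hcard : (Finset.Ico (s + m) (s + 2*m)).card = m := by rw [Nat.card_Ico]; omega
    calc ∑ i ∈ Finset.Ico (s + m) (s + 2*m), c i ^ 2
        ≤ ∑ _i ∈ Finset.Ico (s + m) (s + 2*m), c (s + m) ^ 2 := by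
          apply Finset.sum_le_sum
          intro i hi
          simp only [Finset.mem_Ico] at hi
          have := hmono (s + m) i hi.1
          nlinarith [hnn i, hnn (s+m)]
    _ = m * c (s + m) ^ 2 := by rw [Finset.sum_const, hcard]; ring
  have hA4 : (m : ℝ) * c (s + m) ≤ T := by
    have hcard : (Finset.Ico s (s + m)).card = m := by rw [Nat.card_Ico]; omega
    calc (m:ℝ) * c (s + m) = ∑ _i ∈ Finset.Ico s (s + m), c (s + m) := by
          rw [Finset.sum_const, hcard]; ring
    _ ≤ T := Finset.sum_le_sum fun i hi => by
        simp only [Finset.mem_Ico] at hi; exact hmono i (s + m) hi.2.le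
  have hA5 : T ≤ S := by
    rw [hSdef, hTdef, Finset.sum_Ico_eq_sum_range, Finset.sum_Ico_eq_sum_range]
    have h1 : s + m - s = m := by omega
    have h2 : s - (s - m) = m := by omega
    rw [h1, h2]
    apply Finset.sum_le_sum
    intro i _
    exact hmono (s - m + i) (s + i) (by omega)
  have hTnn : 0 ≤ T := Finset.sum_nonneg fun i _ => hnn i
  have hcs : 0 ≤ c s := hnn s
  have hcsm : 0 ≤ c (s + m) := hnn (s + m)
  have hmpos : (0:ℝ) < m := by exact_mod_cast hm
  rw [hsplit, hsplit2, le_div_iff₀ (by positivity)]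
  nlinarith [mul_le_mul_of_nonneg_right hA2 hTnn, sq_nonneg (S - T), sq_nonneg (S + T),
    mul_le_mul hA4 hA4 (by positivity) hTnn, mul_le_mul_of_nonneg_left hA5 hTnn]

lemma exists_sorted_enum {p : ℕ} (hp : 0 < p) (w : Fin p → ℝ) (A : Finset (Fin p)) :
    ∃ g : ℕ → Fin p,
      Set.InjOn g (Finset.range A.card) ∧
      (Finset.range A.card).image g = A ∧
      (∀ i j, i ≤ j → j < A.card → w (g j) ≤ w (g i)) := by
  classical
  let r : Fin p → Fin p → Prop := fun a b => w b ≤ w a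
  haveI : Std.Total r := ⟨fun a b => le_total (w b) (w a)⟩
  haveI : IsTrans (Fin p) r := ⟨fun a b c hab hbc => le_trans hbc hab⟩
  let L : List (Fin p) := List.insertionSort r A.toList
  have hperm : List.Perm L A.toList := List.perm_insertionSort r A.toList
  have hsorted : L.Pairwise r := List.pairwise_insertionSort r A.toList
  have hnodup : L.Nodup := hperm.nodup_iff.mpr A.nodup_toList
  have hlen : L.length = A.card := by rw [hperm.length_eq, Finset.length_toList]
  refine ⟨fun i => L.getD i ⟨0, hp⟩, ?_, ?_, ?_⟩
  · intro i hi j hj hij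
    simp only [Finset.coe_range, Set.mem_Iio] at hi hj
    dsimp only at hij
    rw [List.getD_eq_getElem _ _ (show i < L.length by omega),
      List.getD_eq_getElem _ _ (show j < L.length by omega)] at hij
    exact (List.Nodup.getElem_inj_iff hnodup).mp hij
  · ext a
    simp only [Finset.mem_image, Finset.mem_range]
    constructor
    · rintro ⟨i, hi, rfl⟩
      rw [List.getD_eq_getElem _ _ (by omega)]
      have : L[i] ∈ L := List.getElem_mem _
      rw [← Finset.mem_toList]
      exact hperm.mem_iff.mp this
    · intro ha
      have : a ∈ L := hperm.mem_iff.mpr (Finset.mem_toList.mpr ha)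
      obtain ⟨i, hi, hEq⟩ := List.getElem_of_mem this
      exact ⟨i, by omega, by rw [List.getD_eq_getElem _ _ (by omega)]; exact hEq⟩
  · intro i j hij hj
    rcases eq_or_lt_of_le hij with rfl | hlt
    · exact le_refl _
    dsimp only
    rw [List.getD_eq_getElem _ _ (by omega), List.getD_eq_getElem _ _ (by omega)]
    exact (List.pairwise_iff_getElem.mp hsorted) i j (by omega) (by omega) hlt

lemma sum_blocks (f : ℕ → ℝ) (a K : ℕ) :
    ∑ j ∈ Finset.range K, ∑ q ∈ Finset.Ico (a*j) (a*(j+1)), f q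
      = ∑ q ∈ Finset.range (a*K), f q := by
  induction K with
  | zero => simp
  | succ K ih =>
    rw [Finset.sum_range_succ, ih, Finset.range_eq_Ico, Finset.range_eq_Ico]
    exact Finset.sum_Ico_consecutive f (Nat.zero_le _) (Nat.mul_le_mul_left a (by omega : K ≤ K + 1))

end Aux

set_option maxHeartbeats 1200000

/-- ℓ₁ minimization under an ℓ₂ constraint, `k`-sparse `β`.
With `k = 2*m` even, `δ_{1.5k} + θ_{k,1.5k} < 1`, `y = Fβ + z`, `‖z‖₂ ≤ ε ≤ η`, if `β̂`
minimizes the ℓ₁ norm subject to `‖y - Fγ‖₂ ≤ η`, then `‖β̂ - β‖₂ ≤ C(η + ε)` where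
`C = √2(1 + δ_{1.5k}) / (1 - δ_{1.5k} - θ_{k,1.5k})`. -/
theorem l2_constrained_l1_error_sparse {n p m : ℕ} (F : Matrix (Fin n) (Fin p) ℝ)
    (hm : 1 ≤ m) (hp : 5 * m ≤ p)
    (hcond : ripConst F (3 * m) + roConst F (2 * m) (3 * m) < 1)
    (β : Fin p → ℝ) (hβ : IsSparse (2 * m) β)
    (z : Fin n → ℝ) (y : Fin n → ℝ) (hy : y = fun i => F.mulVec β i + z i)
    (ε η : ℝ) (hz : l2norm z ≤ ε) (hη : ε ≤ η)
    (βhat : Fin p → ℝ)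
    (hfeas : l2norm (fun i => y i - F.mulVec βhat i) ≤ η)
    (hmin : ∀ γ : Fin p → ℝ, l2norm (fun i => y i - F.mulVec γ i) ≤ η →
      l1norm βhat ≤ l1norm γ) :
    l2norm (fun i => βhat i - β i) ≤
      (Real.sqrt 2 * (1 + ripConst F (3 * m)) /
        (1 - ripConst F (3 * m) - roConst F (2 * m) (3 * m))) * (η + ε) := by
  classical
  obtain ⟨T₀, hT₀card, hT₀z⟩ := hβ
  set h : Fin p → ℝ := fun i => βhat i - β i with hh
  have hp0 : 0 < p := by omega
  obtain ⟨hRIP, hδ0⟩ := ripConst_spec F (3*m) hp0 (by omega)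
  obtain ⟨hRO, hθ0⟩ := roConst_spec F (2*m) (3*m) (by omega) (by omega) (by omega)
  set δ := ripConst F (3*m) with hδdef
  set θ := roConst F (2*m) (3*m) with hθdef
  have hδ1 : δ < 1 := by linarith
  have hδle1 : (0:ℝ) ≤ 1 - δ := by linarith
  have hε0 : 0 ≤ ε := le_trans (l2norm_nonneg z) hz
  have hA0 : 0 ≤ η + ε := by linarith
  -- enumeration of T₀ᶜ sorted by |h| decreasing
  set N := T₀ᶜ.card with hN
  obtain ⟨g, hginj, hgimg, hgmono⟩ := exists_sorted_enum hp0 (fun i => |h i|) T₀ᶜ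
  set c : ℕ → ℝ := fun q => if q < N then |h (g q)| else 0 with hc
  have hc_nn : ∀ q, 0 ≤ c q := by
    intro q
    simp only [hc]
    split <;> [exact abs_nonneg _; exact le_refl 0]
  have hc_mono : ∀ i j, i ≤ j → c j ≤ c i := by
    intro i j hij
    simp only [hc]
    by_cases hj : j < N
    · have hi : i < N := by omega
      simp only [hj, hi, if_true]
      exact hgmono i j hij hj
    · simp only [hj, if_false]
      split <;> [exact abs_nonneg _; exact le_refl 0]
  have huniq : ∀ q q', q < N → q' < N → g q = g q' → q = q' := by
    intro q q' hq hq' hgg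
    exact hginj (Finset.mem_coe.mpr (Finset.mem_range.mpr hq)) (Finset.mem_coe.mpr (Finset.mem_range.mpr hq')) hgg
  have hgmem : ∀ q, q < N → g q ∈ T₀ᶜ := by
    intro q hq
    rw [← hgimg]
    exact Finset.mem_image_of_mem g (Finset.mem_range.mpr hq)
  -- blocks
  set P : Finset ℕ → Finset (Fin p) := fun s => (s.filter (fun q => q < N)).image g with hP
  have hPsum : ∀ (s : Finset ℕ) (f : Fin p → ℝ),
      ∑ i ∈ P s, f i = ∑ q ∈ s.filter (fun q => q < N), f (g q) := by
    intro s f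
    apply Finset.sum_image
    intro q hq q' hq' hgg
    simp only [Finset.coe_filter, Set.mem_setOf_eq, Finset.mem_coe, Finset.mem_filter] at hq hq'
    exact huniq q q' hq.2 hq'.2 hgg
  have hPmem : ∀ (s : Finset ℕ) i, i ∈ P s ↔ ∃ q, q ∈ s ∧ q < N ∧ g q = i := by
    intro s i
    simp only [hP, Finset.mem_image, Finset.mem_filter]
    constructor
    · rintro ⟨q, ⟨h1, h2⟩, h3⟩; exact ⟨q, h1, h2, h3⟩
    · rintro ⟨q, h1, h2, h3⟩; exact ⟨q, ⟨h1, h2⟩, h3⟩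
  have hPsub : ∀ s, P s ⊆ T₀ᶜ := by
    intro s i hi
    obtain ⟨q, _, hq, rfl⟩ := (hPmem s i).mp hi
    exact hgmem q hq
  set K := N with hK
  set T₁ : Finset (Fin p) := P (Finset.range m) with hT₁
  set B : ℕ → Finset (Fin p) := fun j => P (Finset.Ico (m + 2*m*j) (m + 2*m*(j+1))) with hB
  set W : Finset (Fin p) := T₀ ∪ T₁ with hW
  set R : Finset (Fin p) → (Fin p → ℝ) := fun s i => if i ∈ s then h i else 0 with hR
  set u := R W with hu
  set v : ℕ → (Fin p → ℝ) := fun j => R (B j) with hv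
  -- case analysis
  have hBnotW : ∀ j i, i ∈ B j → i ∉ W := by
    intro j i hiB hiW
    obtain ⟨q, hqIco, hqN, rfl⟩ := (hPmem _ i).mp hiB
    simp only [Finset.mem_Ico] at hqIco
    rcases Finset.mem_union.mp hiW with hT | hT
    · exact absurd hT (Finset.mem_compl.mp (hgmem q hqN))
    · obtain ⟨q', hq'm, hq'N, hgg⟩ := (hPmem _ _).mp hT
      simp only [Finset.mem_range] at hq'm
      have := huniq q' q hq'N hqN hgg
      omega
  have hcases : ∀ i, (i ∈ W ∧ ∀ j ∈ Finset.range K, i ∉ B j) ∨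
      (i ∉ W ∧ ∃ j₀ ∈ Finset.range K, i ∈ B j₀ ∧ ∀ j ∈ Finset.range K, i ∈ B j → j = j₀) := by
    intro i
    by_cases hiW : i ∈ W
    · exact Or.inl ⟨hiW, fun j _ hiB => hBnotW j i hiB hiW⟩
    · right
      refine ⟨hiW, ?_⟩
      have hiT₀c : i ∈ T₀ᶜ := by
        rw [Finset.mem_compl]
        intro hT
        exact hiW (Finset.mem_union_left _ hT)
      rw [← hgimg] at hiT₀c
      obtain ⟨q, hqN, rfl⟩ := Finset.mem_image.mp hiT₀c
      rw [Finset.mem_range] at hqN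
      have hqm : ¬ q < m := by
        intro hqm
        exact hiW (Finset.mem_union_right _ ((hPmem _ _).mpr ⟨q, Finset.mem_range.mpr hqm, hqN, rfl⟩))
      have h2m : 0 < 2*m := by omega
      have hdm := Nat.div_add_mod (q - m) (2*m)
      have hmod := Nat.mod_lt (q - m) h2m
      set j₀ := (q - m) / (2*m) with hj₀
      have hexp : 2*m*(j₀+1) = 2*m*j₀ + 2*m := by ring
      have hqIco : q ∈ Finset.Ico (m + 2*m*j₀) (m + 2*m*(j₀+1)) := by
        simp only [Finset.mem_Ico]
        omega
      have hj₀le : j₀ ≤ 2*m*j₀ := Nat.le_mul_of_pos_left j₀ h2m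
      refine ⟨j₀, Finset.mem_range.mpr (by omega), (hPmem _ _).mpr ⟨q, hqIco, hqN, rfl⟩, ?_⟩
      intro j _ hiB
      obtain ⟨q', hq'Ico, hq'N, hgg⟩ := (hPmem _ _).mp hiB
      have hqq : q' = q := huniq q' q hq'N hqN hgg
      subst hqq
      simp only [Finset.mem_Ico] at hq'Ico
      have hexpj : 2*m*(j+1) = 2*m*j + 2*m := by ring
      rcases lt_trichotomy j j₀ with hlt | heq | hgt
      · exfalso
        have hmul : 2*m*(j+1) ≤ 2*m*j₀ := Nat.mul_le_mul_left (2*m) hlt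
        omega
      · exact heq
      · exfalso
        have hmul : 2*m*(j₀+1) ≤ 2*m*j := Nat.mul_le_mul_left (2*m) hgt
        omega
  have hdecomp : ∀ i, h i = u i + ∑ j ∈ Finset.range K, v j i := by
    intro i
    rcases hcases i with ⟨hiW, hnotB⟩ | ⟨hiW, j₀, hj₀, hiB, huniqB⟩
    · simp only [hu, hv, hR, hiW, if_true]
      rw [Finset.sum_eq_zero fun j hj => by simp [hnotB j hj], add_zero]
    · simp only [hu, hv, hR, hiW, if_false]
      rw [Finset.sum_eq_single_of_mem j₀ hj₀ (fun j hj hne => by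
        by_cases hiBj : i ∈ B j
        · exact absurd (huniqB j hj hiBj) hne
        · simp [hiBj])]
      simp [hiB]
  have hsqdecomp : ∀ i, h i ^ 2 = u i ^ 2 + ∑ j ∈ Finset.range K, v j i ^ 2 := by
    intro i
    rcases hcases i with ⟨hiW, hnotB⟩ | ⟨hiW, j₀, hj₀, hiB, huniqB⟩
    · simp only [hu, hv, hR, hiW, if_true]
      rw [Finset.sum_eq_zero fun j hj => by simp [hnotB j hj], add_zero]
    · simp only [hu, hv, hR, hiW, if_false]
      rw [Finset.sum_eq_single_of_mem j₀ hj₀ (fun j hj hne => by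
        by_cases hiBj : i ∈ B j
        · exact absurd (huniqB j hj hiBj) hne
        · simp [hiBj])]
      simp [hiB]
  -- l2 norms of restrictions
  have hRl2 : ∀ s : Finset (Fin p), l2norm (R s) = Real.sqrt (∑ i ∈ s, h i ^ 2) := by
    intro s
    rw [l2norm]
    congr 1
    calc ∑ i, R s i ^ 2 = ∑ i, (if i ∈ s then h i ^ 2 else 0) := by
          apply Finset.sum_congr rfl
          intro i _
          simp only [hR]
          split <;> simp
    _ = ∑ i ∈ Finset.univ ∩ s, h i ^ 2 := Finset.sum_ite_mem _ _ _
    _ = ∑ i ∈ s, h i ^ 2 := by rw [Finset.univ_inter]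
  -- sparsity
  have hT₁card : T₁.card ≤ m := le_trans Finset.card_image_le
    (le_trans (Finset.card_filter_le _ _) (by simp))
  have husp : IsSparse (3*m) u := by
    refine ⟨W, ?_, fun i hi => by simp [hu, hR, hi]⟩
    calc W.card ≤ T₀.card + T₁.card := Finset.card_union_le _ _
    _ ≤ 2*m + m := add_le_add hT₀card hT₁card
    _ = 3*m := by ring
  have hvsp : ∀ j, IsSparse (2*m) (v j) := by
    intro j
    refine ⟨B j, ?_, fun i hi => by simp [hv, hR, hi]⟩
    calc (B j).card ≤ (Finset.Ico (m + 2*m*j) (m + 2*m*(j+1))).card := by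
          exact le_trans Finset.card_image_le (Finset.card_filter_le _ _)
    _ ≤ 2*m := by
          rw [Nat.card_Ico]
          have : 2*m*(j+1) = 2*m*j + 2*m := by ring
          omega
  have hdisj : ∀ j i, v j i = 0 ∨ u i = 0 := by
    intro j i
    by_cases hiB : i ∈ B j
    · exact Or.inr (by simp [hu, hR, hBnotW j i hiB])
    · exact Or.inl (by simp [hv, hR, hiB])
  -- cone constraint
  have hβfeas : l1norm βhat ≤ l1norm β := by
    apply hmin
    have : (fun i => y i - F.mulVec β i) = z := by
      funext i
      rw [hy]
      ring
    rw [this]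
    linarith
  have hβhat : ∀ i, βhat i = β i + h i := fun i => by simp [hh]
  have hcone : ∑ i ∈ T₀ᶜ, |h i| ≤ ∑ i ∈ T₀, |h i| := by
    have e1 : l1norm β = ∑ i ∈ T₀, |β i| := by
      rw [l1norm, ← Finset.sum_add_sum_compl T₀]
      have hz0 : ∑ i ∈ T₀ᶜ, |β i| = 0 :=
        Finset.sum_eq_zero fun i hi => by rw [hT₀z i (Finset.mem_compl.mp hi)]; simp
      rw [hz0, add_zero]
    have e2 : l1norm βhat = ∑ i ∈ T₀, |βhat i| + ∑ i ∈ T₀ᶜ, |h i| := by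
      rw [l1norm, ← Finset.sum_add_sum_compl T₀]
      congr 1
      apply Finset.sum_congr rfl
      intro i hi
      rw [hβhat i, hT₀z i (Finset.mem_compl.mp hi), zero_add]
    have e3 : ∑ i ∈ T₀, |β i| - ∑ i ∈ T₀, |h i| ≤ ∑ i ∈ T₀, |βhat i| := by
      rw [← Finset.sum_sub_distrib]
      apply Finset.sum_le_sum
      intro i _
      rw [hβhat i]
      calc |β i| - |h i| = |β i| - |-(h i)| := by rw [abs_neg]
      _ ≤ |β i - -(h i)| := abs_sub_abs_le_abs_sub _ _
      _ = |β i + h i| := by ring_nf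
    linarith [e2 ▸ hβfeas, e1 ▸ le_refl (l1norm β)]
  -- tube constraint
  have htube : l2norm (F.mulVec h) ≤ η + ε := by
    have hmv : F.mulVec h = fun i => z i - (y i - F.mulVec βhat i) := by
      funext i
      have h1 : h = βhat - β := by funext i; simp [hh]
      rw [h1, Matrix.mulVec_sub, hy]
      simp [Matrix.mulVec_sub]
      ring
    rw [hmv]
    have key : l2norm (fun i => z i - (y i - F.mulVec βhat i)) ≤
        l2norm z + l2norm (fun i => y i - F.mulVec βhat i) := by
      rw [l2norm_eq_norm, l2norm_eq_norm, l2norm_eq_norm]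
      exact norm_sub_le ((WithLp.equiv 2 (Fin n → ℝ)).symm z)
        ((WithLp.equiv 2 (Fin n → ℝ)).symm (fun i => y i - F.mulVec βhat i))
    linarith
  -- block l2 via c
  have hblockc : ∀ j, ∑ i ∈ B j, h i ^ 2 =
      ∑ q ∈ Finset.Ico (m + 2*m*j) (m + 2*m*(j+1)), c q ^ 2 := by
    intro j
    rw [show (∑ i ∈ B j, h i ^ 2) = ∑ i ∈ B j, (fun i => h i ^ 2) i from rfl, hPsum]
    rw [Finset.sum_filter]
    apply Finset.sum_congr rfl
    intro q _
    by_cases hq : q < N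
    · simp only [hq, if_true, hc, sq_abs]
      split_ifs <;> simp [sq_abs]
    · simp only [hq, if_false, hc]
      norm_num
  -- shifting application
  have hshift : ∀ j, l2norm (v j) ≤
      (∑ q ∈ Finset.Ico (2*m*j) (2*m*(j+1)), c q) / Real.sqrt (2*m) := by
    intro j
    rw [hv, hRl2, hblockc]
    have hIco : Finset.Ico (m + 2*m*j) (m + 2*m*(j+1)) =
        Finset.Ico (m + 2*m*j) ((m + 2*m*j) + 2*m) := by
      congr 1
      ring
    rw [hIco]
    have hs := shifting c hc_nn hc_mono m (m + 2*m*j) hm (by omega)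
    have h1 : m + 2*m*j - m = 2*m*j := by omega
    have h2 : m + 2*m*j + m = 2*m*(j+1) := by ring
    rw [h1, h2] at hs
    calc Real.sqrt (∑ i ∈ Finset.Ico (m + 2*m*j) (m + 2*m*j + 2*m), c i ^ 2)
        ≤ Real.sqrt ((∑ q ∈ Finset.Ico (2*m*j) (2*m*(j+1)), c q) ^ 2 / (2*m)) :=
          Real.sqrt_le_sqrt hs
    _ = (∑ q ∈ Finset.Ico (2*m*j) (2*m*(j+1)), c q) / Real.sqrt (2*m) := by
        rw [Real.sqrt_div (sq_nonneg _), Real.sqrt_sq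
          (Finset.sum_nonneg fun q _ => hc_nn q)]
  -- sum of block l2 bounds
  have hXdef : l2norm u = Real.sqrt (∑ i ∈ W, h i ^ 2) := by rw [hu, hRl2]
  set X := l2norm u with hXd
  have hX0 : 0 ≤ X := l2norm_nonneg u
  have htail : ∑ q ∈ Finset.range (2*m*K), c q ≤ ∑ i ∈ T₀ᶜ, |h i| := by
    have h1 : ∑ i ∈ T₀ᶜ, |h i| = ∑ q ∈ Finset.range N, c q := by
      rw [← hgimg, Finset.sum_image (fun q hq q' hq' hgg =>
        huniq q q' (Finset.mem_range.mp hq) (Finset.mem_range.mp hq') hgg)]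
      apply Finset.sum_congr rfl
      intro q hq
      simp [hc, Finset.mem_range.mp hq]
    rw [h1]
    rcases le_or_gt (2*m*K) N with hle | hlt
    · apply Finset.sum_le_sum_of_subset_of_nonneg
        (Finset.range_subset_range.mpr hle) (fun q _ _ => hc_nn q)
    · rw [Finset.range_eq_Ico, ← Finset.sum_Ico_consecutive c (Nat.zero_le N) (le_of_lt hlt)]
      rw [← Finset.range_eq_Ico]
      have : ∑ q ∈ Finset.Ico N (2*m*K), c q = 0 :=
        Finset.sum_eq_zero fun q hq => by
          simp [hc, hK, show ¬ q < N from by simp only [Finset.mem_Ico] at hq; omega]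
      linarith [le_refl (∑ q ∈ Finset.range N, c q)]
  have hCS : ∑ i ∈ T₀, |h i| ≤ Real.sqrt (2*m) * X := by
    have h1 : (∑ i ∈ T₀, |h i|) ^ 2 ≤ (2*m) * ∑ i ∈ W, h i ^ 2 := by
      calc (∑ i ∈ T₀, |h i|) ^ 2 ≤ T₀.card * ∑ i ∈ T₀, |h i| ^ 2 :=
            sq_sum_le_card_mul_sum_sq
      _ ≤ (2*m) * ∑ i ∈ T₀, |h i| ^ 2 := by
          apply mul_le_mul_of_nonneg_right (by exact_mod_cast hT₀card) (by positivity)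
      _ = (2*m) * ∑ i ∈ T₀, h i ^ 2 := by
          congr 1
          exact Finset.sum_congr rfl fun i _ => sq_abs _
      _ ≤ (2*m) * ∑ i ∈ W, h i ^ 2 := by
          apply mul_le_mul_of_nonneg_left ?_ (by positivity)
          exact Finset.sum_le_sum_of_subset_of_nonneg Finset.subset_union_left
            (fun i _ _ => sq_nonneg _)
    calc ∑ i ∈ T₀, |h i| = Real.sqrt ((∑ i ∈ T₀, |h i|) ^ 2) :=
          (Real.sqrt_sq (Finset.sum_nonneg fun i _ => abs_nonneg _)).symm
    _ ≤ Real.sqrt ((2*m) * ∑ i ∈ W, h i ^ 2) := Real.sqrt_le_sqrt h1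
    _ = Real.sqrt (2*m) * Real.sqrt (∑ i ∈ W, h i ^ 2) := Real.sqrt_mul (by positivity) _
    _ = Real.sqrt (2*m) * X := by rw [hXdef]
  have hsumv : ∑ j ∈ Finset.range K, l2norm (v j) ≤ X := by
    have hsq2m : (0:ℝ) < Real.sqrt (2*m) := Real.sqrt_pos.mpr (by positivity)
    calc ∑ j ∈ Finset.range K, l2norm (v j)
        ≤ ∑ j ∈ Finset.range K, (∑ q ∈ Finset.Ico (2*m*j) (2*m*(j+1)), c q) / Real.sqrt (2*m) :=
          Finset.sum_le_sum fun j _ => hshift j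
    _ = (∑ j ∈ Finset.range K, ∑ q ∈ Finset.Ico (2*m*j) (2*m*(j+1)), c q) / Real.sqrt (2*m) := by
          rw [Finset.sum_div]
    _ = (∑ q ∈ Finset.range (2*m*K), c q) / Real.sqrt (2*m) := by rw [sum_blocks]
    _ ≤ (∑ i ∈ T₀, |h i|) / Real.sqrt (2*m) := by
          gcongr
          exact le_trans htail hcone
    _ ≤ (Real.sqrt (2*m) * X) / Real.sqrt (2*m) := by
          gcongr
    _ = X := by field_simp
  -- euclidean space machinery
  set Ψ : (Fin p → ℝ) →ₗ[ℝ] EuclideanSpace ℝ (Fin n) :=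
    ((WithLp.linearEquiv 2 ℝ (Fin n → ℝ)).symm.toLinearMap).comp F.mulVecLin with hΨ
  have hΨnorm : ∀ w : Fin p → ℝ, ‖Ψ w‖ = l2norm (F.mulVec w) := by
    intro w
    rw [l2norm_eq_norm]
    rfl
  have hΨinner : ∀ a b : Fin p → ℝ, ⟪Ψ a, Ψ b⟫ = ∑ i, F.mulVec a i * F.mulVec b i := by
    intro a b
    rw [inner_eq]
    rfl
  have hhdec : h = u + ∑ j ∈ Finset.range K, v j := by
    funext i
    rw [Pi.add_apply, Finset.sum_apply]
    exact hdecomp i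
  have hΨdec : Ψ h = Ψ u + ∑ j ∈ Finset.range K, Ψ (v j) := by
    rw [hhdec, map_add, map_sum]
  set Y := ‖Ψ u‖ with hY
  have hY0 : 0 ≤ Y := norm_nonneg _
  have e_main : Y^2 ≤ (η + ε) * Y + θ * (X * X) := by
    have h1 : (Y:ℝ)^2 = ⟪Ψ u, Ψ u⟫ := (real_inner_self_eq_norm_sq _).symm
    have h2 : ⟪Ψ h, Ψ u⟫ = ⟪Ψ u, Ψ u⟫ + ∑ j ∈ Finset.range K, ⟪Ψ (v j), Ψ u⟫ := by
      rw [hΨdec, inner_add_left, sum_inner]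
    have h3 : Y^2 = ⟪Ψ h, Ψ u⟫ - ∑ j ∈ Finset.range K, ⟪Ψ (v j), Ψ u⟫ := by
      rw [h2, h1]; ring
    have h4 : ⟪Ψ h, Ψ u⟫ ≤ (η + ε) * Y := by
      calc ⟪Ψ h, Ψ u⟫ ≤ ‖Ψ h‖ * ‖Ψ u‖ := real_inner_le_norm _ _
      _ ≤ (η + ε) * Y := by
          apply mul_le_mul_of_nonneg_right ?_ hY0
          rw [hΨnorm]
          exact htube
    have h5 : ∀ j ∈ Finset.range K, -⟪Ψ (v j), Ψ u⟫ ≤ θ * (l2norm (v j) * X) := by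
      intro j _
      have := hRO (v j) u (hvsp j) husp (hdisj j)
      rw [← hΨinner] at this
      have habs := neg_le_of_abs_le this
      linarith [habs]
    have h6 : -∑ j ∈ Finset.range K, ⟪Ψ (v j), Ψ u⟫ ≤ θ * (X * X) := by
      calc -∑ j ∈ Finset.range K, ⟪Ψ (v j), Ψ u⟫
          = ∑ j ∈ Finset.range K, -⟪Ψ (v j), Ψ u⟫ := by rw [Finset.sum_neg_distrib]
      _ ≤ ∑ j ∈ Finset.range K, θ * (l2norm (v j) * X) := Finset.sum_le_sum h5
      _ = θ * X * ∑ j ∈ Finset.range K, l2norm (v j) := by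
          rw [Finset.mul_sum]
          apply Finset.sum_congr rfl
          intro j _; ring
      _ ≤ θ * X * X := by
          apply mul_le_mul_of_nonneg_left hsumv (by positivity)
      _ = θ * (X * X) := by ring
    linarith [h3 ▸ le_refl (Y^2)]
  have e_rip1 : (1 - δ) * X^2 ≤ Y^2 := by
    have h1 := (hRIP u husp).1
    rw [← hΨnorm] at h1
    calc (1-δ) * X^2 = (Real.sqrt (1-δ) * X)^2 := by
          rw [mul_pow, Real.sq_sqrt hδle1]
    _ ≤ Y^2 := by
          apply pow_le_pow_left₀ (by positivity) ?_ 2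
          exact h1
  have e_rip2 : Y ≤ Real.sqrt (1 + δ) * X := by
    have h1 := (hRIP u husp).2
    rw [← hΨnorm] at h1
    exact h1
  set D := 1 - δ - θ with hD
  have hD0 : 0 < D := by rw [hD]; linarith
  have e_X : D * X ≤ Real.sqrt (1 + δ) * (η + ε) := by
    have key : D * X^2 ≤ Real.sqrt (1+δ) * (η + ε) * X := by
      have h1 : (η + ε) * Y ≤ (η + ε) * (Real.sqrt (1+δ) * X) :=
        mul_le_mul_of_nonneg_left e_rip2 hA0
      nlinarith [e_main, e_rip1]
    rcases hX0.eq_or_lt with hX0' | hX0'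
    · rw [← hX0', mul_zero]
      exact mul_nonneg (Real.sqrt_nonneg _) hA0
    · nlinarith [key]
  -- final assembly
  have hl2h : l2norm h ^ 2 ≤ 2 * X^2 := by
    have h1 : l2norm h ^ 2 = ∑ i, h i ^ 2 := by
      rw [l2norm, Real.sq_sqrt (by positivity)]
    have h2 : X^2 = ∑ i ∈ W, h i ^ 2 := by
      rw [hXdef, Real.sq_sqrt (by positivity)]
    have h3 : ∀ j, l2norm (v j) ^ 2 = ∑ i, v j i ^ 2 := by
      intro j
      rw [l2norm, Real.sq_sqrt (by positivity)]
    have h4 : (∑ i, h i ^ 2) = X^2 + ∑ j ∈ Finset.range K, l2norm (v j) ^ 2 := by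
      calc (∑ i, h i ^ 2) = ∑ i, (u i ^ 2 + ∑ j ∈ Finset.range K, v j i ^ 2) :=
            Finset.sum_congr rfl fun i _ => hsqdecomp i
      _ = (∑ i, u i ^ 2) + ∑ i, ∑ j ∈ Finset.range K, v j i ^ 2 := Finset.sum_add_distrib
      _ = (∑ i, u i ^ 2) + ∑ j ∈ Finset.range K, ∑ i, v j i ^ 2 := by rw [Finset.sum_comm]
      _ = X^2 + ∑ j ∈ Finset.range K, l2norm (v j) ^ 2 := by
          congr 1
          · rw [hXd, l2norm, Real.sq_sqrt (by positivity)]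
          · exact Finset.sum_congr rfl fun j _ => (h3 j).symm
    have h5 : ∑ j ∈ Finset.range K, l2norm (v j) ^ 2 ≤ X^2 := by
      calc ∑ j ∈ Finset.range K, l2norm (v j) ^ 2
          ≤ (∑ j ∈ Finset.range K, l2norm (v j)) ^ 2 :=
            Finset.sum_sq_le_sq_sum_of_nonneg fun j _ => l2norm_nonneg _
      _ ≤ X^2 := by
          apply pow_le_pow_left₀ ?_ hsumv 2
          exact Finset.sum_nonneg fun j _ => l2norm_nonneg _
    rw [h1, h4]
    linarith
  have hfinal : l2norm h ≤ Real.sqrt 2 * X := by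
    calc l2norm h = Real.sqrt (l2norm h ^ 2) := (Real.sqrt_sq (l2norm_nonneg h)).symm
    _ ≤ Real.sqrt (2 * X^2) := Real.sqrt_le_sqrt hl2h
    _ = Real.sqrt 2 * X := by
        rw [Real.sqrt_mul (by norm_num), Real.sqrt_sq hX0]
  have hsqrt1δ : Real.sqrt (1 + δ) ≤ 1 + δ := by
    have h1 : Real.sqrt (1+δ) ^ 2 = 1 + δ := Real.sq_sqrt (by linarith)
    nlinarith [Real.sqrt_nonneg (1+δ)]
  have hXbound : X ≤ Real.sqrt (1+δ) * (η + ε) / D := by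
    rw [le_div_iff₀ hD0]
    calc X * D = D * X := by ring
    _ ≤ Real.sqrt (1+δ) * (η + ε) := e_X
  calc l2norm (fun i => βhat i - β i) = l2norm h := rfl
  _ ≤ Real.sqrt 2 * X := hfinal
  _ ≤ Real.sqrt 2 * (Real.sqrt (1+δ) * (η + ε) / D) := by
      apply mul_le_mul_of_nonneg_left hXbound (Real.sqrt_nonneg 2)
  _ ≤ Real.sqrt 2 * (1 + δ) / D * (η + ε) := by
      have e : Real.sqrt 2 * (1 + δ) / D * (η + ε) = Real.sqrt 2 * ((1+δ) * (η + ε) / D) := by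
        ring
      rw [e, mul_div_assoc]
      apply mul_le_mul_of_nonneg_left ?_ (Real.sqrt_nonneg 2)
      have hnum : Real.sqrt (1+δ) * (η + ε) ≤ (1+δ) * (η + ε) :=
        mul_le_mul_of_nonneg_right hsqrt1δ hA0
      rw [← mul_div_assoc]
      exact (div_le_div_iff_of_pos_right hD0).mpr hnum
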